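/- Glick's operator is projectively self-dual: for a polygon P with vertices given by homogeneous coordinate vectors v_1,...,v_n ∈ R^3, and the dual polygon P* with vertices the covectors w_i ∈ (R^3)* vanishing on v_i and v_{i+1}, the operator G_{P*} on (R^3)* equals the dual (transpose) of G_P, where G_P(v) = n·v − Σ_i [(v_{i−1} ∧ v ∧ v_{i+1})/(v_{i−1} ∧ v_i ∧ v_{i+1})]·v_i, with u ∧ v ∧ w denoting det(u,v,w). -/

import Mathlib

/-!
STATEMENT 4. Glick's operator is projectively self-dual: if `P` has vertex
lifts `v i ∈ ℝ³` and the dual polygon `P*` has vertex lifts the covectors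
`w i = v i × v (i+1)` (so that `w i` vanishes on `v i` and `v (i+1)`,
the standard normalization), then `G_{P*} = (G_P)ᵀ`; i.e. for all `x, y`,
`⟪G_{P*} x, y⟫ = ⟪x, G_P y⟫`, identifying covectors with vectors via the
standard pairing.
-/

/-- Determinant of three vectors in `ℝ³`. -/
def det3 (a b c : Fin 3 → ℝ) : ℝ :=
  a 0 * (b 1 * c 2 - b 2 * c 1) - a 1 * (b 0 * c 2 - b 2 * c 0)
    + a 2 * (b 0 * c 1 - b 1 * c 0)

/-- Cross product in `ℝ³`. -/
def cross3 (a b : Fin 3 → ℝ) : Fin 3 → ℝ :=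
  ![a 1 * b 2 - a 2 * b 1, a 2 * b 0 - a 0 * b 2, a 0 * b 1 - a 1 * b 0]

/-- Standard pairing on `ℝ³`. -/
def dot3 (a b : Fin 3 → ℝ) : ℝ := a 0 * b 0 + a 1 * b 1 + a 2 * b 2

/-- Glick's operator of a polygon with vertex lifts `v`. -/
noncomputable def glick {n : ℕ} [NeZero n] (v : Fin n → Fin 3 → ℝ)
    (x : Fin 3 → ℝ) : Fin 3 → ℝ :=
  (n : ℝ) • x -
    ∑ i : Fin n,
      (det3 (v (i - 1)) x (v (i + 1)) / det3 (v (i - 1)) (v i) (v (i + 1))) • v i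

/-- Determinant of three consecutive cross products. -/
lemma det3_cross (a b c d : Fin 3 → ℝ) :
    det3 (cross3 a b) (cross3 b c) (cross3 c d) = det3 a b c * det3 b c d := by
  simp [det3, cross3]; ring

/-- Expansion of a mixed determinant of two cross products. -/
lemma det3_cross_mid (a b c d x : Fin 3 → ℝ) :
    det3 (cross3 a b) x (cross3 c d)
      = det3 b c d * dot3 x a - det3 a c d * dot3 x b := by
  simp [det3, cross3, dot3]; ring

lemma dot3_cross (a b y : Fin 3 → ℝ) : dot3 (cross3 a b) y = det3 a b y := by
  simp [det3, cross3, dot3]; ring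

/-- The key per-index identity, combining a Plücker-type relation with the
cross-product expansions. -/
lemma key_term (a b c d x y : Fin 3 → ℝ)
    (h1 : det3 a b c ≠ 0) (h2 : det3 b c d ≠ 0) :
    (det3 (cross3 a b) x (cross3 c d) /
        det3 (cross3 a b) (cross3 b c) (cross3 c d)) * dot3 (cross3 b c) y
      = dot3 x a * det3 b c y / det3 a b c
        - (dot3 x b * det3 c d y / det3 b c d
            - det3 a y c / det3 a b c * dot3 x b) := by
  rw [det3_cross, det3_cross_mid, dot3_cross]
  have plucker : det3 a c d * det3 b c y
      = det3 c d y * det3 a b c - det3 a y c * det3 b c d := by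
    simp only [det3]; ring
  rw [div_mul_eq_mul_div, sub_mul]
  field_simp
  linear_combination (-(dot3 x b)) * plucker

lemma dot3_comm (a b : Fin 3 → ℝ) : dot3 a b = dot3 b a := by simp [dot3]; ring

lemma dot3_sub_left (a b c : Fin 3 → ℝ) : dot3 (a - b) c = dot3 a c - dot3 b c := by
  simp [dot3]; ring

lemma dot3_smul_left (r : ℝ) (a b : Fin 3 → ℝ) : dot3 (r • a) b = r * dot3 a b := by
  simp [dot3]; ring

lemma dot3_sum_left {n : ℕ} (f : Fin n → Fin 3 → ℝ) (b : Fin 3 → ℝ) :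
    dot3 (∑ i : Fin n, f i) b = ∑ i : Fin n, dot3 (f i) b := by
  simp [dot3, Finset.sum_apply, Finset.sum_add_distrib, Finset.sum_mul]

theorem glick_operator_self_dual
    {n : ℕ} [NeZero n] (hn : 3 ≤ n)
    (v : Fin n → Fin 3 → ℝ)
    -- consecutive triples of vertices are in general position
    (hgen : ∀ i, det3 (v (i - 1)) (v i) (v (i + 1)) ≠ 0)
    -- `w` are the standardly normalized lifts of the vertices of `P*`
    (w : Fin n → Fin 3 → ℝ) (hw : ∀ i, w i = cross3 (v i) (v (i + 1))) :
    ∀ x y : Fin 3 → ℝ, dot3 (glick w x) y = dot3 x (glick v y) := by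
  intro x y
  rw [dot3_comm x]
  unfold glick
  simp only [dot3_sub_left, dot3_smul_left, dot3_sum_left]
  rw [dot3_comm y x]
  congr 1
  set F : Fin n → ℝ := fun i =>
    dot3 x (v i) * det3 (v (i + 1)) (v (i + 1 + 1)) y /
      det3 (v i) (v (i + 1)) (v (i + 1 + 1)) with hF
  have hterm : ∀ i : Fin n,
      det3 (w (i - 1)) x (w (i + 1)) / det3 (w (i - 1)) (w i) (w (i + 1)) * dot3 (w i) y
        = F (i - 1) - (F i -
            det3 (v (i - 1)) y (v (i + 1)) /
              det3 (v (i - 1)) (v i) (v (i + 1)) * dot3 (v i) x) := by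
    intro i
    rw [hw, hw, hw]
    have e1 : i - 1 + 1 = i := by simp
    have e2 : i + 1 - 1 = i := by simp
    have h1 : det3 (v (i - 1)) (v i) (v (i + 1)) ≠ 0 := hgen i
    have h2 : det3 (v i) (v (i + 1)) (v (i + 1 + 1)) ≠ 0 := by
      have := hgen (i + 1); rwa [e2] at this
    rw [e1]
    rw [key_term (v (i - 1)) (v i) (v (i + 1)) (v (i + 1 + 1)) x y h1 h2, hF]
    simp only [e1, e2]
    rw [dot3_comm (v i) x]
  rw [Finset.sum_congr rfl fun i _ => hterm i]
  rw [Finset.sum_sub_distrib, Finset.sum_sub_distrib]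
  have hshift : ∑ i : Fin n, F (i - 1) = ∑ i : Fin n, F i :=
    Fintype.sum_equiv (Equiv.subRight (1 : Fin n)) _ _ (fun i => rfl)
  rw [hshift]
  ring
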